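/- For any integer d ≥ 1 and real t > 0, the d×d matrix L(t) with entries L(t)_{i,j} = λ([i-1,i) ∩ [(j-1)t², jt²)) and the vector z with z_i = Z_d^{-1/2} i^{-1/2} satisfy ⟨z, L(t) z⟩ = Z_d^{-1} ∫_0^{d·min(1,t²)} (⌈r/t²⌉ ⌈r⌉)^{-1/2} dr. -/

import Mathlib

open MeasureTheory

noncomputable def Lmat (d : ℕ) (t : ℝ) : Matrix (Fin d) (Fin d) ℝ :=
  fun i j => (volume (Set.Ico (i : ℝ) ((i : ℝ) + 1) ∩
    Set.Ico ((j : ℝ) * t ^ 2) (((j : ℝ) + 1) * t ^ 2))).toReal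

noncomputable def Zd (d : ℕ) : ℝ := ∑ i ∈ Finset.range d, ((i : ℝ) + 1)⁻¹

noncomputable def zvec (d : ℕ) (i : Fin d) : ℝ :=
  (Real.sqrt (Zd d))⁻¹ * (Real.sqrt ((i : ℝ) + 1))⁻¹

noncomputable def Sset (T : ℝ) (i j : ℕ) : Set ℝ :=
  Set.Ico (i:ℝ) ((i:ℝ)+1) ∩ Set.Ico ((j:ℝ)*T) (((j:ℝ)+1)*T)

noncomputable def cval (i j : ℕ) : ℝ := (Real.sqrt (((j:ℝ)+1) * ((i:ℝ)+1)))⁻¹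

lemma Sset_meas (T : ℝ) (i j : ℕ) : MeasurableSet (Sset T i j) :=
  measurableSet_Ico.inter measurableSet_Ico

lemma Sset_vol (T : ℝ) (i j : ℕ) : volume (Sset T i j) < ⊤ :=
  lt_of_le_of_lt (measure_mono Set.inter_subset_left) measure_Ico_lt_top

lemma union_Ico_mul (d : ℕ) (a : ℝ) (ha : 0 < a) :
    ⋃ i : Fin d, Set.Ico ((i:ℝ)*a) (((i:ℝ)+1)*a) = Set.Ico 0 ((d:ℝ)*a) := by
  ext x
  simp only [Set.mem_iUnion, Set.mem_Ico]
  constructor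
  · rintro ⟨i, h1, h2⟩
    have hi : (i:ℝ) + 1 ≤ d := by exact_mod_cast i.2
    constructor
    · exact le_trans (by positivity) h1
    · exact lt_of_lt_of_le h2 (by nlinarith)
  · rintro ⟨h0, hd⟩
    have hx : 0 ≤ x / a := div_nonneg h0 ha.le
    have hxd : x / a < (d:ℝ) := (div_lt_iff₀ ha).2 hd
    have hfl : 0 ≤ ⌊x/a⌋ := Int.floor_nonneg.2 hx
    have hlt : ⌊x/a⌋ < (d:ℤ) := Int.floor_lt.2 (by exact_mod_cast hxd)
    have hltn : ⌊x/a⌋.toNat < d := by omega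
    have hcast : ((⌊x/a⌋.toNat : ℝ)) = (⌊x/a⌋ : ℝ) := by exact_mod_cast Int.toNat_of_nonneg hfl
    refine ⟨⟨⌊x/a⌋.toNat, hltn⟩, ?_, ?_⟩
    · rw [Fin.val_mk, hcast]
      calc (⌊x/a⌋ : ℝ) * a ≤ (x/a) * a :=
            mul_le_mul_of_nonneg_right (Int.floor_le _) ha.le
        _ = x := by field_simp
    · rw [Fin.val_mk, hcast]
      calc x = (x/a) * a := by field_simp
        _ < ((⌊x/a⌋:ℝ) + 1) * a := mul_lt_mul_of_pos_right (Int.lt_floor_add_one _) ha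

lemma Sset_ae (T : ℝ) (hT : 0 < T) (i j : ℕ) :
    ∀ᵐ r, r ∈ Sset T i j → (Real.sqrt ((⌈r / T⌉ : ℝ) * (⌈r⌉ : ℝ)))⁻¹ = cval i j := by
  have h0 : volume ({(i:ℝ)} ∪ {(j:ℝ)*T} : Set ℝ) = 0 :=
    measure_union_null (measure_singleton _) (measure_singleton _)
  filter_upwards [compl_mem_ae_iff.2 h0] with r hr hrS
  simp only [Set.mem_compl_iff, Set.mem_union, Set.mem_singleton_iff, not_or] at hr
  obtain ⟨⟨hi1, hi2⟩, hj1, hj2⟩ := hrS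
  have hi1' : (i:ℝ) < r := lt_of_le_of_ne hi1 (fun h => hr.1 h.symm)
  have hj1' : (j:ℝ)*T < r := lt_of_le_of_ne hj1 (fun h => hr.2 h.symm)
  have hceil1 : ⌈r⌉ = (i:ℤ) + 1 := by
    rw [Int.ceil_eq_iff]
    constructor
    · push_cast; linarith
    · push_cast; linarith
  have hceil2 : ⌈r/T⌉ = (j:ℤ) + 1 := by
    have h1 : (j:ℝ) < r/T := by rw [lt_div_iff₀ hT]; linarith
    have h2 : r/T ≤ (j:ℝ) + 1 := by rw [div_le_iff₀ hT]; nlinarith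
    rw [Int.ceil_eq_iff]
    constructor
    · push_cast; linarith
    · push_cast; linarith
  rw [hceil1, hceil2, cval]
  push_cast
  ring_nf

lemma Sset_integrable (T : ℝ) (hT : 0 < T) (i j : ℕ) :
    IntegrableOn (fun r => (Real.sqrt ((⌈r / T⌉ : ℝ) * (⌈r⌉ : ℝ)))⁻¹) (Sset T i j) := by
  have hci : IntegrableOn (fun _ => cval i j) (Sset T i j) volume :=
    (integrableOn_const_iff (by simp)).2 (Or.inr (Sset_vol T i j))
  exact hci.congr_fun_ae
    ((ae_restrict_iff' (Sset_meas T i j)).2 ((Sset_ae T hT i j).mono fun r h hr => (h hr).symm))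

lemma Sset_integral (T : ℝ) (hT : 0 < T) (i j : ℕ) :
    ∫ r in Sset T i j, (Real.sqrt ((⌈r / T⌉ : ℝ) * (⌈r⌉ : ℝ)))⁻¹ =
      cval i j * (volume (Sset T i j)).toReal := by
  rw [setIntegral_congr_ae (Sset_meas T i j) (Sset_ae T hT i j), setIntegral_const,
    smul_eq_mul, mul_comm]
  rfl

lemma Sset_union (d : ℕ) (T : ℝ) (hT : 0 < T) :
    ⋃ p : Fin d × Fin d, Sset T p.1 p.2 = Set.Ico 0 ((d:ℝ) * min 1 T) := by
  have e1 : ⋃ i : Fin d, Set.Ico ((i:ℝ)) ((i:ℝ)+1) = Set.Ico 0 ((d:ℝ)) := by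
    simpa using union_Ico_mul d 1 one_pos
  have e2 := union_Ico_mul d T hT
  have e3 : ⋃ p : Fin d × Fin d, Sset T p.1 p.2 =
      (⋃ i : Fin d, Set.Ico ((i:ℝ)) ((i:ℝ)+1)) ∩
      (⋃ j : Fin d, Set.Ico ((j:ℝ)*T) (((j:ℝ)+1)*T)) := by
    ext x; simp only [Set.mem_iUnion, Set.mem_inter_iff, Sset]
    constructor
    · rintro ⟨p, h1, h2⟩; exact ⟨⟨p.1, h1⟩, ⟨p.2, h2⟩⟩
    · rintro ⟨⟨i, h1⟩, ⟨j, h2⟩⟩; exact ⟨(i, j), h1, h2⟩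
  rw [e3, e1, e2, Set.Ico_inter_Ico,
    mul_min_of_nonneg _ _ (by positivity : (0:ℝ) ≤ (d:ℝ))]
  norm_num

lemma Sset_disjoint (d : ℕ) (T : ℝ) (hT : 0 < T) :
    Pairwise (Function.onFun Disjoint fun p : Fin d × Fin d => Sset T p.1 p.2) := by
  rintro ⟨i, j⟩ ⟨i', j'⟩ hne
  simp only [Function.onFun]
  rw [Set.disjoint_left]
  rintro x ⟨⟨hi1, hi2⟩, hj1, hj2⟩ ⟨⟨hi1', hi2'⟩, hj1', hj2'⟩
  apply hne
  have hii : (i:ℕ) = (i':ℕ) := by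
    have b1 : (i:ℕ) < (i':ℕ) + 1 := by exact_mod_cast lt_of_le_of_lt hi1 hi2'
    have b2 : (i':ℕ) < (i:ℕ) + 1 := by exact_mod_cast lt_of_le_of_lt hi1' hi2
    omega
  have hjj : (j:ℕ) = (j':ℕ) := by
    have b1 : (j:ℕ) < (j':ℕ) + 1 := by
      exact_mod_cast lt_of_mul_lt_mul_right
        (lt_of_le_of_lt hj1 hj2' : (j:ℝ)*T < ((j':ℝ)+1)*T) hT.le
    have b2 : (j':ℕ) < (j:ℕ) + 1 := by
      exact_mod_cast lt_of_mul_lt_mul_right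
        (lt_of_le_of_lt hj1' hj2 : (j':ℝ)*T < ((j:ℝ)+1)*T) hT.le
    omega
  exact Prod.ext (Fin.ext hii) (Fin.ext hjj)

lemma key_integral (d : ℕ) (T : ℝ) (hT : 0 < T) :
    (∫ r in (0:ℝ)..((d : ℝ) * min 1 T), (Real.sqrt ((⌈r / T⌉ : ℝ) * (⌈r⌉ : ℝ)))⁻¹) =
      ∑ p : Fin d × Fin d, cval p.1 p.2 * (volume (Sset T p.1 p.2)).toReal := by
  have hD0 : (0:ℝ) ≤ (d:ℝ) * min 1 T := by positivity
  rw [intervalIntegral.integral_of_le hD0]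
  rw [integral_Ioc_eq_integral_Ioo]
  rw [← integral_Ico_eq_integral_Ioo]
  rw [← Sset_union d T hT]
  have h := integral_iUnion_fintype (μ := volume)
      (f := fun r => (Real.sqrt ((⌈r / T⌉ : ℝ) * (⌈r⌉ : ℝ)))⁻¹)
      (s := fun p : Fin d × Fin d => Sset T p.1 p.2)
      (fun p => Sset_meas T p.1 p.2) (Sset_disjoint d T hT)
      (fun p => Sset_integrable T hT p.1 p.2)
  rw [h]
  exact Finset.sum_congr rfl fun p _ => Sset_integral T hT p.1 p.2

theorem lmat_bilinear_eq_integral (d : ℕ) (hd : 1 ≤ d) (t : ℝ) (ht : 0 < t) :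
    ∑ i, ∑ j, Lmat d t i j * zvec d i * zvec d j =
      (Zd d)⁻¹ * ∫ r in (0:ℝ)..((d : ℝ) * min 1 (t ^ 2)),
        (Real.sqrt ((⌈r / t ^ 2⌉ : ℝ) * (⌈r⌉ : ℝ)))⁻¹ := by
  have hT0 : (0:ℝ) < t ^ 2 := by positivity
  have hZ0 : 0 < Zd d := by
    apply Finset.sum_pos
    · intro i _; positivity
    · exact Finset.nonempty_range_iff.2 (by omega)
  rw [key_integral d (t^2) hT0]
  calc ∑ i, ∑ j, Lmat d t i j * zvec d i * zvec d j
      = ∑ i : Fin d, ∑ j : Fin d,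
          (Zd d)⁻¹ * (cval (i:ℕ) (j:ℕ) * (volume (Sset (t^2) (i:ℕ) (j:ℕ))).toReal) := by
        refine Finset.sum_congr rfl fun i _ => Finset.sum_congr rfl fun j _ => ?_
        rw [Lmat, zvec, zvec, cval, Sset]
        have h1 : Real.sqrt (((j:ℝ)+1) * ((i:ℝ)+1)) =
            Real.sqrt ((j:ℝ)+1) * Real.sqrt ((i:ℝ)+1) :=
          Real.sqrt_mul (by positivity) _
        have h2 : Real.sqrt (Zd d) * Real.sqrt (Zd d) = Zd d :=
          Real.mul_self_sqrt hZ0.le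
        have h3 : (Zd d)⁻¹ = (Real.sqrt (Zd d))⁻¹ * (Real.sqrt (Zd d))⁻¹ := by
          rw [← mul_inv, h2]
        rw [h1, h3, mul_inv]
        ring
    _ = (Zd d)⁻¹ * ∑ p : Fin d × Fin d, cval (p.1:ℕ) (p.2:ℕ) *
          (volume (Sset (t^2) (p.1:ℕ) (p.2:ℕ))).toReal := by
        rw [Fintype.sum_prod_type, Finset.mul_sum]
        exact Finset.sum_congr rfl fun i _ => (Finset.mul_sum _ _ _).symm
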